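/- Let $\lambda_1,\dots,\lambda_r \in \mathbb{C}$ and $k \ge 2$. Suppose the power sums $s_d = \sum_{j=1}^r \lambda_j^d$ satisfy $s_d = 0$ for every $d \ge 1$ not divisible by $k$. Then the multiset $\{\lambda_1,\dots,\lambda_r\}$ is invariant under multiplication by $e^{2\pi i/k}$. -/

import Mathlib

theorem stmt13 (r k : ℕ) (hk : 2 ≤ k) (lam : Fin r → ℂ)
    (h : ∀ d, 1 ≤ d → ¬ k ∣ d → ∑ j, lam j ^ d = 0) :
    ((Finset.univ : Finset (Fin r)).val.map lam).map
        (fun z => Complex.exp (2 * Real.pi * Complex.I / k) * z) =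
      (Finset.univ : Finset (Fin r)).val.map lam := by
  classical
  set ζ : ℂ := Complex.exp (2 * Real.pi * Complex.I / k) with hζ
  set M : Multiset ℂ := (Finset.univ : Finset (Fin r)).val.map lam with hM
  have hk0 : (k : ℂ) ≠ 0 := by
    exact Nat.cast_ne_zero.mpr (by omega)
  have hζk : ζ ^ k = 1 := by
    rw [hζ, ← Complex.exp_nat_mul,
      show (k : ℂ) * (2 * Real.pi * Complex.I / k) = 2 * Real.pi * Complex.I by
        field_simp, Complex.exp_two_pi_mul_I]
  -- esymm vanishing for k ∤ d
  have hE : ∀ d, ¬ k ∣ d → M.esymm d = 0 := by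
    intro d
    induction d using Nat.strong_induction_on with
    | _ d ih =>
      intro hd
      have hd0 : d ≠ 0 := by rintro rfl; exact hd (dvd_zero k)
      have newton : (d : ℂ) * M.esymm d = (-1) ^ (d + 1) *
          ∑ a ∈ Finset.HasAntidiagonal.antidiagonal d with a.1 < d,
            (-1) ^ a.1 * (M.esymm a.1) * (∑ j, lam j ^ a.2) := by
        have := congrArg (MvPolynomial.aeval lam) (MvPolynomial.mul_esymm_eq_sum (Fin r) ℂ d)
        simp only [map_mul, map_sum, MvPolynomial.aeval_esymm_eq_multiset_esymm] at this
        simpa [hM, MvPolynomial.aeval_esymm_eq_multiset_esymm, MvPolynomial.psum,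
          map_sum] using this
      have hsum : ∑ a ∈ Finset.HasAntidiagonal.antidiagonal d with a.1 < d,
          (-1 : ℂ) ^ a.1 * (M.esymm a.1) * (∑ j, lam j ^ a.2) = 0 := by
        apply Finset.sum_eq_zero
        rintro ⟨a, b⟩ hab
        simp only [Finset.mem_filter, Finset.HasAntidiagonal.mem_antidiagonal] at hab
        obtain ⟨rfl, halt⟩ := hab
        by_cases hkb : k ∣ b
        · -- then k ∤ a, a < a + b, a ≠ 0
          have hka : ¬ k ∣ a := fun hka => hd (Dvd.dvd.add hka hkb)
          have ha0 : a ≠ 0 := by rintro rfl; exact hka (dvd_zero k)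
          rw [ih a halt hka]
          ring
        · have hb1 : 1 ≤ b := Nat.one_le_iff_ne_zero.mpr (by rintro rfl; exact hkb (dvd_zero k))
          rw [h b hb1 hkb]
          ring
      rw [hsum, mul_zero] at newton
      have : (d : ℂ) ≠ 0 := Nat.cast_ne_zero.mpr hd0
      exact (mul_eq_zero.mp newton).resolve_left this
  -- esymm of scaled multiset equals esymm of M
  have hEs : ∀ d, ((M.map (fun z => ζ * z)).esymm d) = M.esymm d := by
    intro d
    have hsc : (M.map (fun z => ζ * z)).esymm d = ζ ^ d * M.esymm d := by
      have := Multiset.pow_smul_esymm ζ d M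
      simpa [smul_eq_mul] using this.symm
    rw [hsc]
    by_cases hkd : k ∣ d
    · obtain ⟨c, rfl⟩ := hkd
      rw [pow_mul, hζk, one_pow, one_mul]
    · rw [hE d hkd, mul_zero]
  -- the two product polynomials agree
  set N : Multiset ℂ := M.map (fun z => ζ * z) with hN
  have hcard : Multiset.card N = Multiset.card M := Multiset.card_map _ _
  have hpoly : (N.map fun a => Polynomial.X - Polynomial.C a).prod =
      (M.map fun a => Polynomial.X - Polynomial.C a).prod := by
    apply Polynomial.ext
    intro n
    by_cases hn : n ≤ Multiset.card M
    · rw [Multiset.prod_X_sub_C_coeff N (hcard ▸ hn), Multiset.prod_X_sub_C_coeff M hn,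
        hcard, hEs]
    · push_neg at hn
      rw [Polynomial.coeff_eq_zero_of_natDegree_lt, Polynomial.coeff_eq_zero_of_natDegree_lt]
      · rw [Polynomial.natDegree_multiset_prod_X_sub_C_eq_card]; exact hn
      · rw [Polynomial.natDegree_multiset_prod_X_sub_C_eq_card, hcard]; exact hn
  have := congrArg Polynomial.roots hpoly
  rwa [Polynomial.roots_multiset_prod_X_sub_C, Polynomial.roots_multiset_prod_X_sub_C] at this
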